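/- Chapman–Kolmogorov equation for coarse-grained evolution (Theorem 3): Let 𝒫 be a Boltzmann partition of Ω, U a measure-preserving bijection, and p a probability mass function on the cells of 𝒫. If f = Σ_{B∈𝒫} p(B) ρ_B is the corresponding coarse-grained density, then C(f ∘ U⁻¹) = Σ_{A∈𝒫} p'(A) ρ_A pointwise, where p'(A) = Σ_{B∈𝒫} Pr(A|B) p(B) and Pr(A|B) = μ(U(B) ∩ A)/μ(B); i.e., the cell probabilities evolve by the Markov transition matrix of transition probabilities. -/

import Mathlib

open MeasureTheory Set

/-- The coarse-graining of a function `f` with respect to the partition `P`: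
`(Cf)(x) = Σ_{B∈𝒫} (∫_B f dμ / μ(B)) χ_B(x)`. -/
noncomputable def coarseGrain {Ω : Type*} [MeasurableSpace Ω]
    (μ : Measure Ω) (P : ℕ → Set Ω) (f : Ω → ℝ) : Ω → ℝ :=
  fun x => ∑' n, Set.indicator (P n)
    (fun _ => (∫ y in P n, f y ∂μ) / (μ (P n)).toReal) x

/-- The Boltzmann state of a cell `A`: the probability density `ρ_A = χ_A / μ(A)`. -/
noncomputable def boltzmannState {Ω : Type*} [MeasurableSpace Ω]
    (μ : Measure Ω) (A : Set Ω) : Ω → ℝ :=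
  Set.indicator A (fun _ => ((μ A).toReal)⁻¹)

/-- The Gibbs entropy `S_G[ρ] = −∫ ρ log ρ dμ` (with `0 · log 0 = 0`). -/
noncomputable def gibbsEntropy {Ω : Type*} [MeasurableSpace Ω]
    (μ : Measure Ω) (ρ : Ω → ℝ) : ℝ :=
  - ∫ x, ρ x * Real.log (ρ x) ∂μ

/-- **Chapman–Kolmogorov equation** for coarse-grained evolution (Theorem 3): if
`f = Σ_B p(B) ρ_B` is a coarse-grained density for a probability mass function `p` on the
cells of a Boltzmann partition, then `C(f ∘ U⁻¹) = Σ_A p'(A) ρ_A` where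
`p'(A) = Σ_B Pr(A|B) p(B)` and `Pr(A|B) = μ(U B ∩ A)/μ(B)`. -/
theorem chapman_kolmogorov_coarseGrain {Ω : Type*} [MeasurableSpace Ω]
    (μ : Measure Ω) [SigmaFinite μ]
    (P : ℕ → Set Ω) (hPmeas : ∀ n, MeasurableSet (P n))
    (hPdisj : Pairwise (Function.onFun Disjoint P)) (hPcover : (⋃ n, P n) = Set.univ)
    (hPpos : ∀ n, 0 < μ (P n)) (hPfin : ∀ n, μ (P n) < ⊤)
    (U : Ω ≃ᵐ Ω) (hU : MeasurePreserving U μ μ)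
    (p : ℕ → ℝ) (hp0 : ∀ n, 0 ≤ p n) (hp1 : ∀ n, p n ≤ 1) (hpsum : HasSum p 1)
    (f : Ω → ℝ) (hf : f = fun x => ∑' n, p n * boltzmannState μ (P n) x) :
    coarseGrain μ P (fun x => f (U.symm x))
      = fun x => ∑' a,
          (∑' b, ((μ (U '' P b ∩ P a)).toReal / (μ (P b)).toReal) * p b)
            * boltzmannState μ (P a) x := by
  have himg : ∀ b, U '' P b = U.symm ⁻¹' (P b) := fun b => by
    rw [MeasurableEquiv.image_eq_preimage_symm]
  have himgmeas : ∀ b, MeasurableSet (U '' P b) := fun b => by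
    rw [himg b]; exact U.symm.measurable (hPmeas b)
  have hUsymm : MeasurePreserving U.symm μ μ := hU.symm U
  have himgμ : ∀ b, μ (U '' P b) = μ (P b) := fun b => by
    rw [himg b, hUsymm.measure_preimage (hPmeas b).nullMeasurableSet]
  have key : ∀ a, (∫ y in P a, f (U.symm y) ∂μ)
      = ∑' b, ((μ (U '' P b ∩ P a)).toReal / (μ (P b)).toReal) * p b := by
    intro a
    have hrw : ∀ y, f (U.symm y)
        = ∑' b, Set.indicator (U '' P b) (fun _ => p b * ((μ (P b)).toReal)⁻¹) y := by
      intro y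
      rw [hf]
      exact tsum_congr fun b => by
        rw [himg b]
        by_cases hy : U.symm y ∈ P b <;>
          simp [boltzmannState, Set.indicator, Set.mem_preimage, hy]
    calc ∫ y in P a, f (U.symm y) ∂μ
        = ∫ y in P a,
            ∑' b, Set.indicator (U '' P b) (fun _ => p b * ((μ (P b)).toReal)⁻¹) y ∂μ := by
          simp_rw [hrw]
      _ = ∑' b, ∫ y in P a,
            Set.indicator (U '' P b) (fun _ => p b * ((μ (P b)).toReal)⁻¹) y ∂μ := by
          apply integral_tsum
          · intro b
            exact (measurable_const.indicator (himgmeas b)).aestronglyMeasurable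
          · refine ne_top_of_lt (b := ⊤) ?_
            have hle : ∀ b, (∫⁻ y in P a,
                ‖Set.indicator (U '' P b) (fun _ => p b * ((μ (P b)).toReal)⁻¹) y‖₊ ∂μ)
                ≤ ENNReal.ofReal (p b) := by
              intro b
              have h1 : (∫⁻ y in P a,
                  ‖Set.indicator (U '' P b) (fun _ => p b * ((μ (P b)).toReal)⁻¹) y‖₊ ∂μ)
                  = (‖p b * ((μ (P b)).toReal)⁻¹‖₊ : ENNReal) * μ (U '' P b ∩ P a) := by
                have hptw : ∀ y,
                    (‖Set.indicator (U '' P b) (fun _ => p b * ((μ (P b)).toReal)⁻¹) y‖₊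
                      : ENNReal)
                    = Set.indicator (U '' P b)
                        (fun _ => (‖p b * ((μ (P b)).toReal)⁻¹‖₊ : ENNReal)) y := by
                  intro y
                  by_cases hy : y ∈ U '' P b <;> simp [Set.indicator, hy]
                simp_rw [hptw]
                rw [lintegral_indicator_const (himgmeas b),
                  Measure.restrict_apply (himgmeas b)]
              rw [h1]
              have hnn : (‖p b * ((μ (P b)).toReal)⁻¹‖₊ : ENNReal)
                  = ENNReal.ofReal (p b * ((μ (P b)).toReal)⁻¹) := by
                exact Real.enorm_eq_ofReal (mul_nonneg (hp0 b) (by positivity))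
              have hmeas_le : μ (U '' P b ∩ P a) ≤ μ (P b) := by
                calc μ (U '' P b ∩ P a) ≤ μ (U '' P b) :=
                      measure_mono (Set.inter_subset_left)
                  _ = μ (P b) := himgμ b
              calc (‖p b * ((μ (P b)).toReal)⁻¹‖₊ : ENNReal) * μ (U '' P b ∩ P a)
                  ≤ (‖p b * ((μ (P b)).toReal)⁻¹‖₊ : ENNReal) * μ (P b) :=
                    mul_le_mul_right hmeas_le _
                _ = ENNReal.ofReal (p b) := by
                    rw [hnn, ← ENNReal.ofReal_toReal (hPfin b).ne,
                      ← ENNReal.ofReal_mul (mul_nonneg (hp0 b) (by positivity))]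
                    congr 1
                    have ht : (μ (P b)).toReal ≠ 0 :=
                      (ENNReal.toReal_pos (hPpos b).ne' (hPfin b).ne).ne'
                    field_simp
                    rw [ENNReal.toReal_ofReal ENNReal.toReal_nonneg]
                    field_simp
            calc (∑' b, ∫⁻ y in P a,
                  ‖Set.indicator (U '' P b) (fun _ => p b * ((μ (P b)).toReal)⁻¹) y‖₊ ∂μ)
                ≤ ∑' b, ENNReal.ofReal (p b) := ENNReal.tsum_le_tsum hle
              _ = ENNReal.ofReal 1 := by
                  rw [← ENNReal.ofReal_tsum_of_nonneg hp0 hpsum.summable, hpsum.tsum_eq]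
              _ < ⊤ := ENNReal.ofReal_lt_top
      _ = ∑' b, ((μ (U '' P b ∩ P a)).toReal / (μ (P b)).toReal) * p b := by
          refine tsum_congr fun b => ?_
          rw [integral_indicator_const _ (himgmeas b), measureReal_def, Measure.restrict_apply (himgmeas b)]
          simp [smul_eq_mul, div_eq_mul_inv]
          ring
  funext x
  simp only [coarseGrain]
  refine tsum_congr fun a => ?_
  rw [boltzmannState]
  simp only [Set.indicator]
  split_ifs with h
  · rw [key a]; ring
  · simp
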